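/- Let Ω be a relatively compact subset of E with closure contained in {ϱ > 0}, where ϱ : E → [0,∞) is continuous. Then there are constants ϱ⁻, ϱ⁺ ∈ (0,∞) with ϱ⁻ ≤ ϱ ≤ ϱ⁺ on the closure of Ω, and for every ∅ ≠ B ⊂ I with E₊(B) ∩ Ω ≠ ∅ and every f ∈ C²_c(E): ∫_{E₊(B)∩Ω} f² dλ_B^{(n)} + ∫_{E₊(B)∩Ω} |∇^B f|² dλ_B^{(n)} ≤ (β^{n−#B} ϱ⁻)^{-1} · 𝓔₁(f,f), where 𝓔₁(f,f) = 𝓔(f,f) + ‖f‖²_{L²(E;μ)}. -/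

import Mathlib

open MeasureTheory Set ENNReal

noncomputable section

def orthE (n : ℕ) : Set (Fin n → ℝ) := {x | ∀ i, 0 ≤ x i}

def Eplus (n : ℕ) (B : Finset (Fin n)) : Set (Fin n → ℝ) :=
  {x | (∀ i ∈ B, 0 < x i) ∧ (∀ i ∉ B, x i = 0)}

def lamB (n : ℕ) (B : Finset (Fin n)) : Measure (Fin n → ℝ) :=
  Measure.pi fun i => if i ∈ B then volume.restrict (Ici (0 : ℝ)) else Measure.dirac 0

def mMeas (n : ℕ) (β : ℝ) : Measure (Fin n → ℝ) :=
  ∑ B : Finset (Fin n), (ENNReal.ofReal β) ^ (n - B.card) • lamB n B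

def muB (n : ℕ) (β : ℝ) (ϱ : (Fin n → ℝ) → ℝ) (B : Finset (Fin n)) :
    Measure (Fin n → ℝ) :=
  ((ENNReal.ofReal β) ^ (n - B.card) • lamB n B).withDensity fun x => ENNReal.ofReal (ϱ x)

def pd (n : ℕ) (i : Fin n) (f : (Fin n → ℝ) → ℝ) (x : Fin n → ℝ) : ℝ :=
  fderiv ℝ f x (Pi.single i 1)

def energyForm (n : ℕ) (β : ℝ) (ϱ : (Fin n → ℝ) → ℝ) (f : (Fin n → ℝ) → ℝ) : ℝ :=
  ∑ B ∈ Finset.univ.filter (fun B : Finset (Fin n) => B ≠ ∅),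
    ∫ x in Eplus n B, (∑ i ∈ B, pd n i f x ^ 2) ∂(muB n β ϱ B)

/-! ### Auxiliary lemmas -/

instance lamB_fin (n : ℕ) (B : Finset (Fin n)) : IsFiniteMeasureOnCompacts (lamB n B) := by
  have hsf : ∀ i : Fin n, SigmaFinite
      (if i ∈ B then volume.restrict (Ici (0 : ℝ)) else Measure.dirac 0) := by
    intro i; split_ifs <;> infer_instance
  have hfc : ∀ i : Fin n, IsFiniteMeasureOnCompacts
      (if i ∈ B then volume.restrict (Ici (0 : ℝ)) else Measure.dirac 0) := by
    intro i; split_ifs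
    · exact ⟨fun K hK => lt_of_le_of_lt (Measure.restrict_le_self K) hK.measure_lt_top⟩
    · exact ⟨fun K hK => lt_of_le_of_lt (measure_mono (subset_univ K)) (by simp)⟩
  exact Measure.pi.isFiniteMeasureOnCompacts _

lemma measurableSet_Eplus (n : ℕ) (B : Finset (Fin n)) : MeasurableSet (Eplus n B) := by
  have h : Eplus n B = (⋂ i, ⋂ (_ : i ∈ B), {x : Fin n → ℝ | 0 < x i}) ∩
      (⋂ i, ⋂ (_ : i ∉ B), {x : Fin n → ℝ | x i = 0}) := by
    ext x; simp [Eplus]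
  rw [h]
  exact (MeasurableSet.iInter fun i => MeasurableSet.iInter fun _ =>
      measurableSet_lt measurable_const (measurable_pi_apply i)).inter
    (MeasurableSet.iInter fun i => MeasurableSet.iInter fun _ =>
      measurableSet_eq_fun (measurable_pi_apply i) measurable_const)

lemma hcs_finset_sum {ι α : Type*} [TopologicalSpace α] (s : Finset ι) (p : ι → α → ℝ)
    (h : ∀ i ∈ s, HasCompactSupport (p i)) :
    HasCompactSupport (fun x => ∑ i ∈ s, p i x) := by
  classical
  induction s using Finset.induction_on with
  | empty =>
      simp only [Finset.sum_empty]
      simpa [HasCompactSupport, tsupport] using isCompact_empty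
  | @insert a s ha ih =>
      simp only [Finset.sum_insert ha]
      exact (h a (Finset.mem_insert_self a s)).add
        (ih fun i hi => h i (Finset.mem_insert_of_mem hi))

lemma withDensity_mono_meas {α : Type*} [MeasurableSpace α] {μ ν : Measure α}
    (h : μ ≤ ν) (f : α → ℝ≥0∞) : μ.withDensity f ≤ ν.withDensity f := by
  refine Measure.le_intro fun s hs _ => ?_
  rw [withDensity_apply _ hs, withDensity_apply _ hs]
  exact lintegral_mono' (Measure.restrict_mono (le_refl s) h) le_rfl

lemma smul_mono_meas {α : Type*} [MeasurableSpace α] {μ ν : Measure α}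
    (h : μ ≤ ν) (c : ℝ≥0∞) : c • μ ≤ c • ν := by
  refine Measure.le_intro fun s hs _ => ?_
  simp only [Measure.smul_apply, smul_eq_mul]
  exact mul_le_mul_right (h s) _

lemma mMeas_ge (n : ℕ) (β : ℝ) (B : Finset (Fin n)) :
    (ENNReal.ofReal β) ^ (n - B.card) • lamB n B ≤ mMeas n β := by
  refine Measure.le_intro fun s hs _ => ?_
  rw [mMeas, Measure.finset_sum_apply]
  exact Finset.single_le_sum
    (f := fun C : Finset (Fin n) => ((ENNReal.ofReal β) ^ (n - C.card) • lamB n C) s)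
    (fun i _ => zero_le) (Finset.mem_univ B)

lemma lint_ne_top {n : ℕ} (ν : Measure (Fin n → ℝ)) [IsFiniteMeasureOnCompacts ν]
    {h : (Fin n → ℝ) → ℝ} (hc : Continuous h) (hcs : HasCompactSupport h) :
    ∫⁻ x, ENNReal.ofReal (h x) ∂ν ≠ ⊤ :=
  (Integrable.lintegral_lt_top (hc.integrable_of_hasCompactSupport hcs)).ne

/-- Core estimate. -/
lemma core {n : ℕ} (ν : Measure (Fin n → ℝ))
    {g ϱ : (Fin n → ℝ) → ℝ} (hg : Continuous g) (hgnn : ∀ x, 0 ≤ g x)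
    (hϱ : Continuous ϱ)
    {D D' : Set (Fin n → ℝ)} (hD : MeasurableSet D) (hD' : D' ⊆ D)
    {ϱm c : ℝ} (hϱm : 0 < ϱm) (hc : 0 < c) (hbound : ∀ x ∈ D, ϱm ≤ ϱ x)
    (μ' : Measure (Fin n → ℝ))
    (hle : ENNReal.ofReal c • ((ν.restrict D).withDensity fun x => ENNReal.ofReal (ϱ x)) ≤ μ')
    (hfin : ∫⁻ x, ENNReal.ofReal (g x) ∂μ' ≠ ⊤) :
    ∫ x in D', g x ∂ν ≤ (c * ϱm)⁻¹ * ∫ x, g x ∂μ' := by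
  have hgm : Measurable fun x => ENNReal.ofReal (g x) := hg.measurable.ennreal_ofReal
  have hϱm' : Measurable fun x => ENNReal.ofReal (ϱ x) := hϱ.measurable.ennreal_ofReal
  have h1 : ∫ x in D', g x ∂ν = (∫⁻ x in D', ENNReal.ofReal (g x) ∂ν).toReal :=
    integral_eq_lintegral_of_nonneg_ae (Filter.Eventually.of_forall hgnn)
      hg.aestronglyMeasurable
  have h2 : ∫ x, g x ∂μ' = (∫⁻ x, ENNReal.ofReal (g x) ∂μ').toReal :=
    integral_eq_lintegral_of_nonneg_ae (Filter.Eventually.of_forall hgnn)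
      hg.aestronglyMeasurable
  have key : ENNReal.ofReal (c * ϱm) * ∫⁻ x in D', ENNReal.ofReal (g x) ∂ν ≤
      ∫⁻ x, ENNReal.ofReal (g x) ∂μ' := by
    have hL1 : ∫⁻ x in D', ENNReal.ofReal (g x) ∂ν ≤ ∫⁻ x in D, ENNReal.ofReal (g x) ∂ν :=
      lintegral_mono' (Measure.restrict_mono hD' le_rfl) le_rfl
    have hL2 : ∫⁻ x in D, ENNReal.ofReal ϱm * ENNReal.ofReal (g x) ∂ν ≤
        ∫⁻ x in D, ENNReal.ofReal (ϱ x) * ENNReal.ofReal (g x) ∂ν := by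
      refine lintegral_mono_ae ?_
      filter_upwards [ae_restrict_mem hD] with x hx
      exact mul_le_mul_left (ENNReal.ofReal_le_ofReal (hbound x hx)) _
    calc ENNReal.ofReal (c * ϱm) * ∫⁻ x in D', ENNReal.ofReal (g x) ∂ν
        = ENNReal.ofReal c * (ENNReal.ofReal ϱm * ∫⁻ x in D', ENNReal.ofReal (g x) ∂ν) := by
          rw [ENNReal.ofReal_mul hc.le, mul_assoc]
      _ ≤ ENNReal.ofReal c * (ENNReal.ofReal ϱm * ∫⁻ x in D, ENNReal.ofReal (g x) ∂ν) := by
          exact mul_le_mul_right (mul_le_mul_right hL1 _) _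
      _ = ENNReal.ofReal c * ∫⁻ x in D, ENNReal.ofReal ϱm * ENNReal.ofReal (g x) ∂ν := by
          rw [lintegral_const_mul _ hgm]
      _ ≤ ENNReal.ofReal c * ∫⁻ x in D, ENNReal.ofReal (ϱ x) * ENNReal.ofReal (g x) ∂ν :=
          mul_le_mul_right hL2 _
      _ = ENNReal.ofReal c *
          ∫⁻ x, ENNReal.ofReal (g x)
            ∂((ν.restrict D).withDensity fun x => ENNReal.ofReal (ϱ x)) := by
          rw [lintegral_withDensity_eq_lintegral_mul _ hϱm' hgm]; rfl
      _ = ∫⁻ x, ENNReal.ofReal (g x)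
            ∂(ENNReal.ofReal c •
              ((ν.restrict D).withDensity fun x => ENNReal.ofReal (ϱ x))) :=
          by rw [lintegral_smul_measure, smul_eq_mul]
      _ ≤ ∫⁻ x, ENNReal.ofReal (g x) ∂μ' := lintegral_mono' hle le_rfl
  have hcm : 0 < c * ϱm := mul_pos hc hϱm
  have htr := ENNReal.toReal_mono hfin key
  rw [ENNReal.toReal_mul, ENNReal.toReal_ofReal hcm.le] at htr
  rw [h1, h2]
  have h3 := mul_le_mul_of_nonneg_left htr (inv_nonneg.2 hcm.le)
  rwa [← mul_assoc, inv_mul_cancel₀ hcm.ne', one_mul] at h3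

theorem stmt7 (n : ℕ) (β : ℝ) (hβ : 0 < β) (ϱ : (Fin n → ℝ) → ℝ)
    (hϱc : Continuous ϱ) (hϱnn : ∀ x, 0 ≤ ϱ x) (hϱint : Integrable ϱ (mMeas n β))
    (Ω : Set (Fin n → ℝ)) (hΩ : IsCompact (closure Ω))
    (hΩE : closure Ω ⊆ {x ∈ orthE n | 0 < ϱ x}) :
    ∃ ϱm ϱp : ℝ, 0 < ϱm ∧ ϱm ≤ ϱp ∧
      (∀ x ∈ closure Ω, ϱm ≤ ϱ x ∧ ϱ x ≤ ϱp) ∧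
      ∀ B : Finset (Fin n), B ≠ ∅ → (Eplus n B ∩ Ω).Nonempty →
        ∀ f : (Fin n → ℝ) → ℝ, ContDiff ℝ 2 f → HasCompactSupport f →
          (∫ x in Eplus n B ∩ Ω, f x ^ 2 ∂(lamB n B)) +
              (∫ x in Eplus n B ∩ Ω, (∑ i ∈ B, pd n i f x ^ 2) ∂(lamB n B)) ≤
            (β ^ (n - B.card) * ϱm)⁻¹ *
              (energyForm n β ϱ f +
                ∫ x, f x ^ 2 ∂((mMeas n β).withDensity fun x => ENNReal.ofReal (ϱ x))) := by
  rcases eq_empty_or_nonempty (closure Ω) with hne | hne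
  · refine ⟨1, 1, one_pos, le_rfl, by simp [hne], fun B hB hBΩ f hf hfs => ?_⟩
    obtain ⟨x, -, hxΩ⟩ := hBΩ
    exact absurd (subset_closure hxΩ) (by simp [hne])
  obtain ⟨x₀, hx₀, hmin⟩ := hΩ.exists_isMinOn hne hϱc.continuousOn
  obtain ⟨x₁, hx₁, hmax⟩ := hΩ.exists_isMaxOn hne hϱc.continuousOn
  refine ⟨ϱ x₀, ϱ x₁, (hΩE hx₀).2, hmin hx₁, fun x hx => ⟨hmin hx, hmax hx⟩,
    fun B hB hBΩ f hf hfs => ?_⟩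
  set ϱm := ϱ x₀ with hϱm_def
  have hϱm : 0 < ϱm := (hΩE hx₀).2
  -- continuity / support facts
  have hfc : Continuous f := hf.continuous
  have hg1 : Continuous fun x => f x ^ 2 := by fun_prop
  have hg1nn : ∀ x, 0 ≤ f x ^ 2 := fun x => sq_nonneg _
  have hg1s : HasCompactSupport fun x => f x ^ 2 :=
    hfs.comp_left (g := fun t : ℝ => t ^ 2) (by norm_num)
  have hfd : Continuous (fderiv ℝ f) := hf.continuous_fderiv (by norm_num)
  have hpdc : ∀ i : Fin n, Continuous (pd n i f) := fun i =>
    hfd.clm_apply continuous_const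
  have hpds : ∀ i : Fin n, HasCompactSupport (pd n i f) := fun i =>
    hfs.fderiv_apply ℝ (Pi.single i 1)
  have hg2 : Continuous fun x => ∑ i ∈ B, pd n i f x ^ 2 := by
    exact continuous_finset_sum _ fun i _ => (hpdc i).pow 2
  have hg2nn : ∀ x, 0 ≤ ∑ i ∈ B, pd n i f x ^ 2 := fun x =>
    Finset.sum_nonneg fun i _ => sq_nonneg _
  have hg2s : HasCompactSupport fun x => ∑ i ∈ B, pd n i f x ^ 2 :=
    hcs_finset_sum _ _ fun i _ =>
      (hpds i).comp_left (g := fun t : ℝ => t ^ 2) (by norm_num)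
  -- sets and constants
  set D : Set (Fin n → ℝ) := Eplus n B ∩ closure Ω with hD_def
  have hDmeas : MeasurableSet D :=
    (measurableSet_Eplus n B).inter isClosed_closure.measurableSet
  have hD' : Eplus n B ∩ Ω ⊆ D := inter_subset_inter_right _ subset_closure
  have hbound : ∀ x ∈ D, ϱm ≤ ϱ x := fun x hx => hmin hx.2
  set c : ℝ := β ^ (n - B.card) with hc_def
  have hcpos : 0 < c := pow_pos hβ _
  set cE : ℝ≥0∞ := (ENNReal.ofReal β) ^ (n - B.card) with hcE_def
  have hcE : cE = ENNReal.ofReal c := by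
    rw [hc_def, hcE_def, ENNReal.ofReal_pow hβ.le]
  set ν := lamB n B with hν_def
  set rhoD : (Fin n → ℝ) → ℝ≥0∞ := fun x => ENNReal.ofReal (ϱ x) with hrhoD_def
  have hrhoDm : Measurable rhoD := hϱc.measurable.ennreal_ofReal
  -- Claim 1 : f² term
  have claim1 : ∫ x in Eplus n B ∩ Ω, f x ^ 2 ∂ν ≤
      (c * ϱm)⁻¹ * ∫ x, f x ^ 2 ∂((mMeas n β).withDensity rhoD) := by
    refine core ν hg1 hg1nn hϱc hDmeas hD' hϱm hcpos hbound _ ?_ ?_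
    · calc ENNReal.ofReal c • ((ν.restrict D).withDensity rhoD)
          ≤ ENNReal.ofReal c • (ν.withDensity rhoD) :=
            smul_mono_meas (withDensity_mono_meas (Measure.restrict_le_self) _) _
        _ = (cE • ν).withDensity rhoD := by rw [hcE, withDensity_smul_measure]
        _ ≤ (mMeas n β).withDensity rhoD := withDensity_mono_meas (mMeas_ge n β B) _
    · have heq : ∫⁻ x, ENNReal.ofReal (f x ^ 2) ∂((mMeas n β).withDensity rhoD) =
          ∫⁻ x, ENNReal.ofReal (ϱ x * f x ^ 2) ∂(mMeas n β) := by
        rw [lintegral_withDensity_eq_lintegral_mul _ hrhoDm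
          (hg1.measurable.ennreal_ofReal)]
        congr 1; funext x
        simp [rhoD, ENNReal.ofReal_mul (hϱnn x)]
      rw [heq, mMeas, lintegral_finset_sum_measure]
      refine ENNReal.sum_ne_top.2 fun C _ => ?_
      rw [lintegral_smul_measure]
      exact ENNReal.mul_ne_top (ENNReal.pow_ne_top ENNReal.ofReal_ne_top)
        (lint_ne_top (lamB n C) (hϱc.mul hg1) (hg1s.mul_left))
  -- Claim 2 : gradient term
  have claim2 : ∫ x in Eplus n B ∩ Ω, (∑ i ∈ B, pd n i f x ^ 2) ∂ν ≤
      (c * ϱm)⁻¹ * ∫ x in Eplus n B, (∑ i ∈ B, pd n i f x ^ 2) ∂(muB n β ϱ B) := by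
    refine core ν hg2 hg2nn hϱc hDmeas hD' hϱm hcpos hbound _ ?_ ?_
    · have h1 : (muB n β ϱ B).restrict (Eplus n B) =
          ENNReal.ofReal c • ((ν.restrict (Eplus n B)).withDensity rhoD) := by
        rw [muB, MeasureTheory.restrict_withDensity (measurableSet_Eplus n B),
          Measure.restrict_smul, ← hcE_def, hcE, withDensity_smul_measure]
      rw [h1]
      refine smul_mono_meas (withDensity_mono_meas ?_ _) _
      exact Measure.restrict_mono (inter_subset_left) le_rfl
    · have hle2 : ∫⁻ x, ENNReal.ofReal (∑ i ∈ B, pd n i f x ^ 2)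
            ∂((muB n β ϱ B).restrict (Eplus n B)) ≤
          ∫⁻ x, ENNReal.ofReal (∑ i ∈ B, pd n i f x ^ 2) ∂(muB n β ϱ B) :=
        lintegral_mono' Measure.restrict_le_self le_rfl
      refine ne_top_of_le_ne_top ?_ hle2
      have heq : ∫⁻ x, ENNReal.ofReal (∑ i ∈ B, pd n i f x ^ 2) ∂(muB n β ϱ B) =
          cE * ∫⁻ x, ENNReal.ofReal (ϱ x * ∑ i ∈ B, pd n i f x ^ 2) ∂ν := by
        rw [muB, lintegral_withDensity_eq_lintegral_mul _ hrhoDm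
          (hg2.measurable.ennreal_ofReal), lintegral_smul_measure]
        congr 1; congr 1; funext x
        simp [rhoD, ENNReal.ofReal_mul (hϱnn x)]
      rw [heq]
      refine ENNReal.mul_ne_top ?_ (lint_ne_top ν (hϱc.mul hg2) (hg2s.mul_left))
      rw [hcE]; exact ENNReal.ofReal_ne_top
  -- energyForm dominates the B term
  have henergy : ∫ x in Eplus n B, (∑ i ∈ B, pd n i f x ^ 2) ∂(muB n β ϱ B) ≤
      energyForm n β ϱ f := by
    rw [energyForm]
    refine Finset.single_le_sum (f := fun C : Finset (Fin n) =>
        ∫ x in Eplus n C, (∑ i ∈ C, pd n i f x ^ 2) ∂(muB n β ϱ C))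
      (fun C _ => integral_nonneg fun x => Finset.sum_nonneg fun i _ => sq_nonneg _) ?_
    simp [hB]
  have hTnn : 0 ≤ ∫ x, f x ^ 2 ∂((mMeas n β).withDensity rhoD) :=
    integral_nonneg fun x => sq_nonneg _
  have hinv : (0:ℝ) ≤ (c * ϱm)⁻¹ := inv_nonneg.2 (mul_pos hcpos hϱm).le
  calc (∫ x in Eplus n B ∩ Ω, f x ^ 2 ∂ν) +
        (∫ x in Eplus n B ∩ Ω, (∑ i ∈ B, pd n i f x ^ 2) ∂ν)
      ≤ (c * ϱm)⁻¹ * (∫ x, f x ^ 2 ∂((mMeas n β).withDensity rhoD)) +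
        (c * ϱm)⁻¹ * (∫ x in Eplus n B, (∑ i ∈ B, pd n i f x ^ 2) ∂(muB n β ϱ B)) :=
        add_le_add claim1 claim2
    _ ≤ (c * ϱm)⁻¹ * (∫ x, f x ^ 2 ∂((mMeas n β).withDensity rhoD)) +
        (c * ϱm)⁻¹ * energyForm n β ϱ f := by
        exact add_le_add le_rfl (mul_le_mul_of_nonneg_left henergy hinv)
    _ = (c * ϱm)⁻¹ * (energyForm n β ϱ f +
          ∫ x, f x ^ 2 ∂((mMeas n β).withDensity rhoD)) := by ring
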